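/- Let G be a simple graph, u and v two distinct vertices, and w1,...,wk (1 ≤ k ≤ deg(v)) distinct vertices that are neighbors of v but neither neighbors of u nor equal to u. Let G' be obtained from G by deleting the edges w_i v and adding the edges w_i u for all i. If deg(u) ≥ deg(v) and Σ_{y ∈ N(u)} deg(y) ≥ Σ_{x ∈ N(v)} deg(x), then M2(G') > M2(G). -/

import Mathlib

open SimpleGraph Finset

section ZagrebAux

variable {V : Type*} [Fintype V] [DecidableEq V]

/-- Double counting: twice the sum over edges of a symmetric function equals the sum over
ordered adjacent pairs. -/
lemma zagreb_pair_sum (G : SimpleGraph V) [DecidableRel G.Adj]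
    (f : V → V → ℤ) (hf : ∀ a b, f a b = f b a) :
    ∑ p ∈ (univ ×ˢ univ).filter (fun p : V × V => G.Adj p.1 p.2), f p.1 p.2 =
      2 * ∑ e ∈ G.edgeFinset, Sym2.lift ⟨f, hf⟩ e := by
  rw [Finset.mul_sum]
  rw [← Finset.sum_fiberwise_of_maps_to (g := fun p : V × V => s(p.1, p.2))
      (t := G.edgeFinset) (fun p hp => by
        simp only [mem_filter] at hp
        simpa [mem_edgeFinset] using hp.2)]
  refine Finset.sum_congr rfl ?_
  intro e he
  induction e with
  | _ a b =>
    rw [mem_edgeFinset, mem_edgeSet] at he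
    have hab : a ≠ b := he.ne
    have hfib : ((univ ×ˢ univ).filter (fun p : V × V => G.Adj p.1 p.2)).filter
        (fun p => s(p.1, p.2) = s(a, b)) = {(a, b), (b, a)} := by
      ext ⟨x, y⟩
      simp only [mem_filter, mem_product, mem_univ, true_and, mem_insert, mem_singleton,
        Prod.mk.injEq]
      constructor
      · rintro ⟨hadj, hmk⟩
        rw [Sym2.eq_iff] at hmk
        tauto
      · rintro (⟨rfl, rfl⟩ | ⟨rfl, rfl⟩)
        · exact ⟨he, rfl⟩
        · exact ⟨he.symm, Sym2.eq_swap⟩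
    rw [hfib, Finset.sum_pair (by simp [hab, Ne.symm hab, Prod.ext_iff])]
    simp [Sym2.lift_mk, hf b a, two_mul]

lemma zagreb_pair_sum' (G : SimpleGraph V) [DecidableRel G.Adj] (f : V → V → ℤ) :
    ∑ p ∈ (univ ×ˢ univ).filter (fun p : V × V => G.Adj p.1 p.2), f p.1 p.2 =
      ∑ a, ∑ b ∈ G.neighborFinset a, f a b := by
  rw [Finset.sum_filter, Finset.sum_product]
  refine Finset.sum_congr rfl fun a _ => ?_
  rw [neighborFinset_eq_filter, Finset.sum_filter]

end ZagrebAux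

/-- The second Zagreb index `M2(G) = ∑_{uv ∈ E(G)} d(u)·d(v)`. -/
noncomputable def M2 {V : Type*} [Fintype V] (G : SimpleGraph V) : ℕ :=
  letI := Classical.decEq V
  letI : DecidableRel G.Adj := Classical.decRel _
  ∑ e ∈ G.edgeFinset,
    Sym2.lift ⟨fun x y => G.degree x * G.degree y, fun _ _ => Nat.mul_comm _ _⟩ e

/-- The degree of a vertex. -/
noncomputable def deg {V : Type*} [Fintype V] (G : SimpleGraph V) (v : V) : ℕ :=
  letI : DecidableRel G.Adj := Classical.decRel _
  G.degree v

set_option maxHeartbeats 1600000 in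
/-- Moving `k` neighbors `w₁, …, w_k` of `v` (none of which is `u` or adjacent to `u`)
from `v` to `u` strictly increases the second Zagreb index, provided
`d(u) ≥ d(v)` and `∑_{y ∈ N(u)} d(y) ≥ ∑_{x ∈ N(v)} d(x)`. -/
theorem stmt_2 {V : Type*} [Fintype V] (G G' : SimpleGraph V) (u v : V) (huv : u ≠ v)
    (k : ℕ) (hk1 : 1 ≤ k) (hk2 : k ≤ deg G v)
    (w : Fin k → V) (hw : Function.Injective w)
    (hwv : ∀ i, G.Adj v (w i))
    (hwu : ∀ i, ¬ G.Adj u (w i)) (hwu' : ∀ i, w i ≠ u)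
    (hG' : G'.edgeSet =
      (G.edgeSet \ Set.range fun i => s(w i, v)) ∪ Set.range fun i => s(w i, u))
    (hdeg : deg G u ≥ deg G v)
    (hsum : ∑ y ∈ (G.neighborSet u).toFinite.toFinset, deg G y ≥
            ∑ x ∈ (G.neighborSet v).toFinite.toFinset, deg G x) :
    M2 G' > M2 G := by
  letI := Classical.decEq V
  letI : DecidableRel G.Adj := Classical.decRel _
  letI : DecidableRel G'.Adj := Classical.decRel _
  have hk2' : k ≤ G.degree v := hk2
  -- adjacency characterization of G'
  have adj' : ∀ a b : V, G'.Adj a b ↔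
      ((G.Adj a b ∧ ¬ ∃ i, s(w i, v) = s(a, b)) ∨ ∃ i, s(w i, u) = s(a, b)) := by
    intro a b
    rw [← SimpleGraph.mem_edgeSet, hG']
    simp [Set.mem_range, SimpleGraph.mem_edgeSet]
  have hwv' : ∀ i, w i ≠ v := fun i => (hwv i).ne'
  set W : Finset V := univ.image w with hW
  have hmemW : ∀ b, b ∈ W ↔ ∃ i, w i = b := by intro b; simp [hW]
  have hWcard : W.card = k := by
    rw [hW, Finset.card_image_of_injective _ hw, card_univ, Fintype.card_fin]
  have hWNv : W ⊆ G.neighborFinset v := by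
    intro b hb; rw [hmemW] at hb; obtain ⟨i, rfl⟩ := hb
    rw [mem_neighborFinset]; exact hwv i
  have hWNu : ∀ b ∈ W, b ∉ G.neighborFinset u := by
    intro b hb hb'; rw [hmemW] at hb; obtain ⟨i, rfl⟩ := hb
    exact hwu i (by rwa [mem_neighborFinset] at hb')
  -- N'(u) = N(u) ∪ W
  have hNu : G'.neighborFinset u = G.neighborFinset u ∪ W := by
    ext b
    rw [mem_neighborFinset, adj' u b, mem_union, mem_neighborFinset, hmemW]
    constructor
    · rintro (⟨h, -⟩ | ⟨i, hi⟩)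
      · exact Or.inl h
      · rw [Sym2.eq_iff] at hi
        rcases hi with ⟨h1, h2⟩ | ⟨h1, h2⟩
        · exact absurd h1 (hwu' i)
        · exact Or.inr ⟨i, h1⟩
    · rintro (h | ⟨i, rfl⟩)
      · refine Or.inl ⟨h, ?_⟩
        rintro ⟨i, hi⟩
        rw [Sym2.eq_iff] at hi
        rcases hi with ⟨h1, h2⟩ | ⟨h1, h2⟩
        · exact hwu' i h1
        · exact huv (h2.symm ▸ rfl)
      · exact Or.inr ⟨i, by rw [Sym2.eq_iff]; exact Or.inr ⟨rfl, rfl⟩⟩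
  have hdu' : G'.degree u = G.degree u + k := by
    rw [← card_neighborFinset_eq_degree, hNu, Finset.card_union_of_disjoint, hWcard,
      card_neighborFinset_eq_degree]
    exact Finset.disjoint_left.2 fun b hb hb' => hWNu b hb' hb
  -- N'(v) = N(v) \ W
  have hNv : G'.neighborFinset v = G.neighborFinset v \ W := by
    ext b
    rw [mem_neighborFinset, adj' v b, mem_sdiff, mem_neighborFinset, hmemW]
    constructor
    · rintro (⟨h, h2⟩ | ⟨i, hi⟩)
      · refine ⟨h, fun ⟨i, hi⟩ => h2 ⟨i, ?_⟩⟩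
        rw [Sym2.eq_iff]; exact Or.inr ⟨hi, rfl⟩
      · rw [Sym2.eq_iff] at hi
        rcases hi with ⟨h1, h2⟩ | ⟨h1, h2⟩
        · exact absurd h1 (hwv' i)
        · exact absurd h2 huv
    · rintro ⟨h, h2⟩
      refine Or.inl ⟨h, ?_⟩
      rintro ⟨i, hi⟩
      rw [Sym2.eq_iff] at hi
      rcases hi with ⟨h1, h3⟩ | ⟨h1, h3⟩
      · exact hwv' i h1
      · exact h2 ⟨i, h1⟩
  have hdv' : G'.degree v = G.degree v - k := by
    rw [← card_neighborFinset_eq_degree, hNv, Finset.card_sdiff_of_subset hWNv, hWcard,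
      card_neighborFinset_eq_degree]
  -- degrees elsewhere unchanged
  have hdx : ∀ x, x ≠ u → x ≠ v → G'.degree x = G.degree x := by
    intro x hxu hxv
    by_cases hxW : ∃ j, w j = x
    · obtain ⟨j, rfl⟩ := hxW
      have hNx : G'.neighborFinset (w j) = insert u ((G.neighborFinset (w j)).erase v) := by
        ext b
        rw [mem_neighborFinset, adj' (w j) b, mem_insert, mem_erase, mem_neighborFinset]
        constructor
        · rintro (⟨h, h2⟩ | ⟨i, hi⟩)
          · refine Or.inr ⟨?_, h⟩
            rintro rfl
            exact h2 ⟨j, by rw [Sym2.eq_iff]; exact Or.inl ⟨rfl, rfl⟩⟩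
          · rw [Sym2.eq_iff] at hi
            rcases hi with ⟨h1, h2⟩ | ⟨h1, h2⟩
            · exact Or.inl h2.symm
            · exact absurd h2 (Ne.symm hxu)
        · rintro (rfl | ⟨hbv, h⟩)
          · exact Or.inr ⟨j, by rw [Sym2.eq_iff]; exact Or.inl ⟨rfl, rfl⟩⟩
          · refine Or.inl ⟨h, ?_⟩
            rintro ⟨i, hi⟩
            rw [Sym2.eq_iff] at hi
            rcases hi with ⟨h1, h2⟩ | ⟨h1, h2⟩
            · exact hbv h2.symm
            · exact hwv' j h2.symm
      rw [← card_neighborFinset_eq_degree, hNx, ← card_neighborFinset_eq_degree]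
      have hv : v ∈ G.neighborFinset (w j) := by
        rw [mem_neighborFinset]; exact (hwv j).symm
      have hu : u ∉ (G.neighborFinset (w j)).erase v := by
        intro hu'
        exact hwu j ((mem_neighborFinset _ _ _).1 (Finset.mem_of_mem_erase hu')).symm
      rw [Finset.card_insert_of_notMem hu, Finset.card_erase_of_mem hv]
      have hpos : 0 < (G.neighborFinset (w j)).card := Finset.card_pos.2 ⟨v, hv⟩
      omega
    · have hNx : G'.neighborFinset x = G.neighborFinset x := by
        ext b
        rw [mem_neighborFinset, adj' x b, mem_neighborFinset]
        constructor
        · rintro (⟨h, -⟩ | ⟨i, hi⟩)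
          · exact h
          · rw [Sym2.eq_iff] at hi
            rcases hi with ⟨h1, h2⟩ | ⟨h1, h2⟩
            · exact absurd h1 (fun hh => hxW ⟨i, hh⟩)
            · exact absurd h2 (Ne.symm hxu)
        · intro h
          refine Or.inl ⟨h, ?_⟩
          rintro ⟨i, hi⟩
          rw [Sym2.eq_iff] at hi
          rcases hi with ⟨h1, h2⟩ | ⟨h1, h2⟩
          · exact hxW ⟨i, h1⟩
          · exact hxv h2.symm
      rw [← card_neighborFinset_eq_degree, hNx, card_neighborFinset_eq_degree]
  -- integer-valued degrees
  set da : V → ℤ := fun x => (G.degree x : ℤ) with hda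
  set db : V → ℤ := fun x => (G'.degree x : ℤ) with hdbdef
  set ez : V → ℤ := fun x => (if x = u then (1 : ℤ) else 0) - (if x = v then 1 else 0)
    with hez
  have hdbu : db u = da u + k := by simp [hdbdef, hda, hdu']
  have hdbv : db v = da v - k := by
    simp only [hdbdef, hda, hdv']
    rw [Nat.cast_sub hk2']
  have hdbx : ∀ x, x ≠ u → x ≠ v → db x = da x := fun x h1 h2 => by
    simp [hdbdef, hda, hdx x h1 h2]
  have hdball : ∀ x, db x = da x + (k : ℤ) * ez x := by
    intro x
    by_cases h1 : x = u
    · subst h1; simp [hez, huv, hdbu]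
    · by_cases h2 : x = v
      · subst h2; simp [hez, h1, hdbv]; ring
      · simp [hez, h1, h2, hdbx x h1 h2]
  -- pair sets
  set P : Finset (V × V) := (univ ×ˢ univ).filter (fun p : V × V => G.Adj p.1 p.2) with hP
  set P' : Finset (V × V) := (univ ×ˢ univ).filter (fun p : V × V => G'.Adj p.1 p.2) with hP'
  set Dset : Finset (V × V) :=
    (univ.image fun i => ((w i, v) : V × V)) ∪ (univ.image fun i => ((v, w i) : V × V))
    with hDsetdef
  set Aset : Finset (V × V) :=
    (univ.image fun i => ((w i, u) : V × V)) ∪ (univ.image fun i => ((u, w i) : V × V))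
    with hAsetdef
  have hmemP : ∀ a b : V, ((a, b) ∈ P) ↔ G.Adj a b := by intro a b; simp [hP]
  have hmemP' : ∀ a b : V, ((a, b) ∈ P') ↔ G'.Adj a b := by intro a b; simp [hP']
  have hmemD : ∀ a b : V, ((a, b) ∈ Dset) ↔ ∃ i, s(w i, v) = s(a, b) := by
    intro a b
    simp only [hDsetdef, mem_union, mem_image, mem_univ, true_and, Prod.mk.injEq]
    constructor
    · rintro (⟨i, h1, h2⟩ | ⟨i, h1, h2⟩)
      · exact ⟨i, by rw [Sym2.eq_iff]; exact Or.inl ⟨h1, h2⟩⟩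
      · exact ⟨i, by rw [Sym2.eq_iff]; exact Or.inr ⟨h2, h1⟩⟩
    · rintro ⟨i, hi⟩
      rw [Sym2.eq_iff] at hi
      rcases hi with ⟨h1, h2⟩ | ⟨h1, h2⟩
      · exact Or.inl ⟨i, h1, h2⟩
      · exact Or.inr ⟨i, h2, h1⟩
  have hmemA : ∀ a b : V, ((a, b) ∈ Aset) ↔ ∃ i, s(w i, u) = s(a, b) := by
    intro a b
    simp only [hAsetdef, mem_union, mem_image, mem_univ, true_and, Prod.mk.injEq]
    constructor
    · rintro (⟨i, h1, h2⟩ | ⟨i, h1, h2⟩)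
      · exact ⟨i, by rw [Sym2.eq_iff]; exact Or.inl ⟨h1, h2⟩⟩
      · exact ⟨i, by rw [Sym2.eq_iff]; exact Or.inr ⟨h2, h1⟩⟩
    · rintro ⟨i, hi⟩
      rw [Sym2.eq_iff] at hi
      rcases hi with ⟨h1, h2⟩ | ⟨h1, h2⟩
      · exact Or.inl ⟨i, h1, h2⟩
      · exact Or.inr ⟨i, h2, h1⟩
  have hDP : Dset ⊆ P := by
    rintro ⟨a, b⟩ hab
    rw [hmemD] at hab
    obtain ⟨i, hi⟩ := hab
    rw [Sym2.eq_iff] at hi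
    rw [hmemP]
    rcases hi with ⟨h1, h2⟩ | ⟨h1, h2⟩
    · rw [← h1, ← h2]; exact (hwv i).symm
    · rw [← h1, ← h2]; exact hwv i
  have hAP : ∀ p ∈ Aset, p ∉ P := by
    rintro ⟨a, b⟩ hab hP0
    rw [hmemA] at hab
    rw [hmemP] at hP0
    obtain ⟨i, hi⟩ := hab
    rw [Sym2.eq_iff] at hi
    rcases hi with ⟨h1, h2⟩ | ⟨h1, h2⟩
    · exact hwu i (h1 ▸ h2 ▸ hP0.symm)
    · exact hwu i (h1 ▸ h2 ▸ hP0)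
  have hP'eq : P' = (P \ Dset) ∪ Aset := by
    ext ⟨a, b⟩
    rw [hmemP' a b, adj' a b, mem_union, mem_sdiff, hmemP, hmemD, hmemA]
  have hdisj : Disjoint (P \ Dset) Aset :=
    Finset.disjoint_left.2 fun p hp hpA => hAP p hpA (Finset.mem_sdiff.1 hp).1
  -- cast M2 to ℤ sums over pairs
  have hM2G : 2 * (M2 G : ℤ) = ∑ p ∈ P, da p.1 * da p.2 := by
    have h0 : M2 G = ∑ e ∈ G.edgeFinset,
        Sym2.lift ⟨fun x y => G.degree x * G.degree y, fun _ _ => Nat.mul_comm _ _⟩ e := rfl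
    rw [hP, zagreb_pair_sum G (fun a b => da a * da b) (fun a b => mul_comm _ _), h0]
    push_cast
    rw [Finset.mul_sum, Finset.mul_sum]
    refine Finset.sum_congr rfl fun e _ => ?_
    induction e with
    | _ x y => simp [hda]
  have hM2G' : 2 * (M2 G' : ℤ) = ∑ p ∈ P', db p.1 * db p.2 := by
    have h0 : M2 G' = ∑ e ∈ G'.edgeFinset,
        Sym2.lift ⟨fun x y => G'.degree x * G'.degree y, fun _ _ => Nat.mul_comm _ _⟩ e := rfl
    rw [hP', zagreb_pair_sum G' (fun a b => db a * db b) (fun a b => mul_comm _ _), h0]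
    push_cast
    rw [Finset.mul_sum, Finset.mul_sum]
    refine Finset.sum_congr rfl fun e _ => ?_
    induction e with
    | _ x y => simp [hdbdef]
  -- quantities
  set S : V → ℤ := fun a => ∑ b ∈ G.neighborFinset a, da b with hS
  set T : ℤ := ∑ i : Fin k, da (w i) with hT
  set t : ℤ := if G.Adj u v then 1 else 0 with ht
  -- sums over Dset and Aset
  have hinj1 : ∀ c : V, Function.Injective (fun i => ((w i, c) : V × V)) := by
    intro c i j hij
    exact hw (congrArg Prod.fst hij)
  have hinj2 : ∀ c : V, Function.Injective (fun i => ((c, w i) : V × V)) := by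
    intro c i j hij
    exact hw (congrArg Prod.snd hij)
  have hsumD : ∑ p ∈ Dset, db p.1 * db p.2 = 2 * T * db v := by
    rw [hDsetdef, Finset.sum_union, Finset.sum_image (fun i _ j _ h => hinj1 v h),
      Finset.sum_image (fun i _ j _ h => hinj2 v h)]
    · have : ∀ i : Fin k, db (w i) = da (w i) := fun i => hdbx _ (hwu' i) (hwv' i)
      simp only [this]
      rw [← Finset.sum_mul, ← Finset.mul_sum, ← hT]
      ring
    · refine Finset.disjoint_left.2 ?_
      rintro ⟨a, b⟩ hab hab'
      simp only [mem_image, mem_univ, true_and, Prod.mk.injEq] at hab hab'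
      obtain ⟨i, hi1, hi2⟩ := hab
      obtain ⟨j, hj1, hj2⟩ := hab'
      exact hwv' i (hi1.trans hj1.symm)
  have hsumA : ∑ p ∈ Aset, db p.1 * db p.2 = 2 * T * db u := by
    rw [hAsetdef, Finset.sum_union, Finset.sum_image (fun i _ j _ h => hinj1 u h),
      Finset.sum_image (fun i _ j _ h => hinj2 u h)]
    · have : ∀ i : Fin k, db (w i) = da (w i) := fun i => hdbx _ (hwu' i) (hwv' i)
      simp only [this]
      rw [← Finset.sum_mul, ← Finset.mul_sum, ← hT]
      ring
    · refine Finset.disjoint_left.2 ?_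
      rintro ⟨a, b⟩ hab hab'
      simp only [mem_image, mem_univ, true_and, Prod.mk.injEq] at hab hab'
      obtain ⟨i, hi1, hi2⟩ := hab
      obtain ⟨j, hj1, hj2⟩ := hab'
      exact hwu' i (hi1.trans hj1.symm)
  -- main expansion over P
  have hinner : ∀ a : V, ∑ b ∈ G.neighborFinset a, ez b =
      (if u ∈ G.neighborFinset a then (1 : ℤ) else 0)
      - (if v ∈ G.neighborFinset a then (1 : ℤ) else 0) := by
    intro a
    simp only [hez]
    rw [Finset.sum_sub_distrib]
    congr 1
    · exact Finset.sum_ite_eq' _ u (fun _ => (1 : ℤ))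
    · exact Finset.sum_ite_eq' _ v (fun _ => (1 : ℤ))
  have hswap : ∀ a c : V, (c ∈ G.neighborFinset a) = (a ∈ G.neighborFinset c) := by
    intro a c
    simp [mem_neighborFinset, adj_comm]
  have hsum_ind : ∀ c : V, ∑ a, da a * (if a ∈ G.neighborFinset c then (1 : ℤ) else 0)
      = S c := by
    intro c
    simp only [mul_ite, mul_one, mul_zero]
    rw [Finset.sum_ite_mem, univ_inter, hS]
  have hPexp : ∑ p ∈ P, db p.1 * db p.2 =
      2 * (M2 G : ℤ) + 2 * k * (S u - S v) - 2 * k ^ 2 * t := by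
    rw [hP, zagreb_pair_sum' G (fun a b => db a * db b)]
    have hexp : ∀ a : V, ∑ b ∈ G.neighborFinset a, db a * db b =
        (∑ b ∈ G.neighborFinset a, da a * da b)
        + (k : ℤ) * ez a * S a
        + da a * ((k : ℤ) * (∑ b ∈ G.neighborFinset a, ez b))
        + (k : ℤ) ^ 2 * ez a * (∑ b ∈ G.neighborFinset a, ez b) := by
      intro a
      have : ∀ b, db a * db b = da a * da b + ((k : ℤ) * ez a) * da b
          + da a * ((k : ℤ) * ez b) + ((k : ℤ) * ez a) * ((k : ℤ) * ez b) := by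
        intro b
        rw [hdball a, hdball b]; ring
      simp only [this]
      rw [Finset.sum_add_distrib, Finset.sum_add_distrib, Finset.sum_add_distrib]
      have hA : ∑ b ∈ G.neighborFinset a, (k : ℤ) * ez a * da b = (k : ℤ) * ez a * S a := by
        rw [← Finset.mul_sum]
      have hB : ∑ b ∈ G.neighborFinset a, da a * ((k : ℤ) * ez b)
          = da a * ((k : ℤ) * ∑ b ∈ G.neighborFinset a, ez b) := by
        rw [← Finset.mul_sum, ← Finset.mul_sum]
      have hC : ∑ b ∈ G.neighborFinset a, (k : ℤ) * ez a * ((k : ℤ) * ez b)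
          = (k : ℤ) ^ 2 * ez a * ∑ b ∈ G.neighborFinset a, ez b := by
        rw [← Finset.mul_sum, ← Finset.mul_sum]; ring
      rw [hA, hB, hC]
    simp only [hexp]
    rw [Finset.sum_add_distrib, Finset.sum_add_distrib, Finset.sum_add_distrib]
    have e1 : ∑ a, ∑ b ∈ G.neighborFinset a, da a * da b = 2 * (M2 G : ℤ) := by
      rw [hM2G, hP, zagreb_pair_sum' G (fun a b => da a * da b)]
    have e2 : ∑ a, (k : ℤ) * ez a * S a = (k : ℤ) * (S u - S v) := by
      simp only [hez, mul_assoc]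
      rw [← Finset.mul_sum]
      congr 1
      simp only [sub_mul, one_mul, zero_mul]
      rw [Finset.sum_sub_distrib]
      congr 1 <;> simp
    have e3 : ∑ a, da a * ((k : ℤ) * (∑ b ∈ G.neighborFinset a, ez b))
        = (k : ℤ) * (S u - S v) := by
      simp only [hinner]
      have : ∀ a, da a * ((k : ℤ) * ((if u ∈ G.neighborFinset a then (1 : ℤ) else 0)
          - (if v ∈ G.neighborFinset a then (1 : ℤ) else 0)))
          = (k : ℤ) * (da a * (if a ∈ G.neighborFinset u then (1 : ℤ) else 0)
            - da a * (if a ∈ G.neighborFinset v then (1 : ℤ) else 0)) := by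
        intro a
        simp only [hswap a u, hswap a v]; ring
      simp only [this]
      rw [← Finset.mul_sum, Finset.sum_sub_distrib, hsum_ind u, hsum_ind v]
    have e4 : ∑ a, (k : ℤ) ^ 2 * ez a * (∑ b ∈ G.neighborFinset a, ez b)
        = -(2 * (k : ℤ) ^ 2 * t) := by
      simp only [hinner]
      simp only [hez, mul_assoc]
      rw [← Finset.mul_sum]
      have huu : u ∉ G.neighborFinset u := by simp [mem_neighborFinset]
      have hvv : v ∉ G.neighborFinset v := by simp [mem_neighborFinset]
      have hvu : (v ∈ G.neighborFinset u) = G.Adj u v := by simp [mem_neighborFinset]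
      have huv2 : (u ∈ G.neighborFinset v) = G.Adj u v := by
        simp [mem_neighborFinset, adj_comm]
      have hgen : ∀ (a : V) (E : ℤ), ((if a = u then (1:ℤ) else 0) - (if a = v then 1 else 0)) * E
          = (if a = u then E else 0) - (if a = v then E else 0) := by
        intro a E
        have h3 : v ≠ u := Ne.symm huv
        by_cases h1 : a = u <;> by_cases h2 : a = v
        · exact absurd (h1.symm.trans h2) huv
        · subst h1; simp [huv]
        · subst h2; simp [h3]
        · simp [h1, h2]
      have : ∑ a, ((if a = u then (1:ℤ) else 0) - (if a = v then 1 else 0)) *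
          ((if u ∈ G.neighborFinset a then (1 : ℤ) else 0)
            - (if v ∈ G.neighborFinset a then (1 : ℤ) else 0)) = -2 * t := by
        simp only [hgen]
        rw [Finset.sum_sub_distrib, Finset.sum_ite_eq' univ u, Finset.sum_ite_eq' univ v]
        simp only [mem_univ, if_true]
        rw [ht]
        simp only [huu, hvv, hvu, huv2, if_false]
        by_cases h : G.Adj u v <;> simp [h]
      rw [this]; ring
    rw [e1, e2, e3, e4]
    ring
  -- the key identity
  have hkey : 2 * (M2 G' : ℤ) = 2 * (M2 G : ℤ) + 2 * k * (S u - S v) - 2 * k ^ 2 * t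
      + 2 * T * (da u - da v + 2 * k) := by
    rw [hM2G', hP'eq, Finset.sum_union hdisj, Finset.sum_sdiff_eq_sub hDP, hsumD, hsumA,
      hPexp, hdbu, hdbv]
    ring
  -- bounds
  have hSu : S v ≤ S u := by
    have h1 : (G.neighborSet u).toFinite.toFinset = G.neighborFinset u := by
      ext a; simp [Set.Finite.mem_toFinset]
    have h2 : (G.neighborSet v).toFinite.toFinset = G.neighborFinset v := by
      ext a; simp [Set.Finite.mem_toFinset]
    have hsum' : ∑ x ∈ G.neighborFinset v, G.degree x ≤ ∑ y ∈ G.neighborFinset u, G.degree y := by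
      simpa only [h1, h2, show ∀ x, deg G x = G.degree x from fun _ => rfl] using hsum
    simp only [hS, hda]
    exact_mod_cast hsum'
  have hDge : da v ≤ da u := by
    simp only [hda]
    exact_mod_cast hdeg
  have hTk : (k : ℤ) ≤ T := by
    rw [hT]
    have : ∀ i ∈ (univ : Finset (Fin k)), (1 : ℤ) ≤ da (w i) := by
      intro i _
      simp only [hda]
      have : 0 < G.degree (w i) := by
        rw [← card_neighborFinset_eq_degree]
        exact Finset.card_pos.2 ⟨v, by rw [mem_neighborFinset]; exact (hwv i).symm⟩
      exact_mod_cast this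
    calc (k : ℤ) = ∑ _i : Fin k, (1 : ℤ) := by simp
    _ ≤ ∑ i : Fin k, da (w i) := Finset.sum_le_sum this
  have ht0 : 0 ≤ t := by rw [ht]; split_ifs <;> norm_num
  have ht1 : t ≤ 1 := by rw [ht]; split_ifs <;> norm_num
  have hkz : (1 : ℤ) ≤ k := by exact_mod_cast hk1
  have hfinal : (M2 G : ℤ) < M2 G' := by
    have step1 : 0 ≤ 2 * (k : ℤ) * (S u - S v) := by
      have := mul_nonneg (by linarith : (0:ℤ) ≤ 2 * (k:ℤ)) (sub_nonneg.2 hSu)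
      linarith
    have step2 : 2 * (k : ℤ) ^ 2 * t ≤ 2 * (k : ℤ) ^ 2 := by
      have := mul_le_mul_of_nonneg_left ht1 (by positivity : (0:ℤ) ≤ 2 * (k:ℤ) ^ 2)
      linarith
    have hq : (k : ℤ) * (2 * (k : ℤ)) ≤ T * (da u - da v + 2 * (k : ℤ)) :=
      mul_le_mul hTk (by linarith) (by linarith) (by linarith)
    have step3 : 2 * (k : ℤ) ^ 2 ≤ T * (da u - da v + 2 * (k : ℤ)) := by
      have h0 : (k : ℤ) * (2 * (k : ℤ)) = 2 * (k : ℤ) ^ 2 := by ring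
      linarith
    have step4 : (1 : ℤ) ≤ (k : ℤ) ^ 2 := by
      have := mul_le_mul hkz hkz (by norm_num) (by linarith)
      nlinarith
    linarith [hkey, step1, step2, step3, step4]
  exact_mod_cast hfinal
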